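/- Let φ : ℕ → (0,∞) be a positive function. If the set E(φ) = {x ∈ [0,1) : |T_b^n(x) − x| ≥ φ(n) for all but finitely many n ≥ 1} has Hausdorff dimension 1, then liminf_{n→∞} φ(n) = 0. -/

import Mathlib

open MeasureTheory Filter
open scoped ENNReal NNReal
namespace Paper
/-- The expanding map `T_b : [0,1) → [0,1)`, `x ↦ bx (mod 1)`. -/
noncomputable def Tmap (b : ℕ) : ℝ → ℝ := fun x => Int.fract ((b : ℝ) * x)
lemma tmap_iter (b : ℕ) : ∀ (n : ℕ) (x : ℝ), (Tmap b)^[n + 1] x = Int.fract ((b:ℝ)^(n+1) * x) := by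
  intro n
  induction n with
  | zero => intro x; simp [Tmap]
  | succ k ih =>
    intro x
    rw [Function.iterate_succ_apply', ih]
    show Int.fract ((b:ℝ) * Int.fract ((b:ℝ)^(k+1) * x)) = _
    have h1 : (b:ℝ) * Int.fract ((b:ℝ)^(k+1) * x)
        = (b:ℝ)^(k+2) * x - ((b * ⌊(b:ℝ)^(k+1) * x⌋ : ℤ) : ℝ) := by
      rw [Int.fract]; push_cast; ring
    rw [h1, Int.fract_sub_intCast]

def ESet (b N : ℕ) (δ : ℝ) : Set ℝ :=
  {x | x ∈ Set.Ico (0:ℝ) 1 ∧ ∀ n, N ≤ n → δ ≤ |(Tmap b)^[n] x - x|}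
open scoped Classical in
noncomputable def SC (b N : ℕ) (δ : ℝ) (n : ℕ) : Finset ℕ :=
  (Finset.range (b^n)).filter
    (fun i => (ESet b N δ ∩ Set.Ico ((i:ℝ)/(b:ℝ)^n) (((i:ℝ)+1)/(b:ℝ)^n)).Nonempty)
set_option maxHeartbeats 1000000 in
lemma elim {b : ℕ} (hb : 3 ≤ b) {δ : ℝ} (hδ0 : 0 < δ) (hδ1 : δ ≤ 1/3)
    {n : ℕ} (hn : 1 ≤ n) {p : ℕ} (hp : p + 1 < b^n) :
    ∃ α : ℝ, (p:ℝ)/(b:ℝ)^n ≤ α ∧ α + δ/(2*((b:ℝ)^n - 1)) < ((p:ℝ)+1)/(b:ℝ)^n ∧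
      ∀ x ∈ Set.Icc α (α + δ/(2*((b:ℝ)^n - 1))), |Int.fract ((b:ℝ)^n * x) - x| < δ := by
  have hbn : (3:ℝ) ≤ (b:ℝ)^n := by
    calc (3:ℝ) = 3^1 := by norm_num
    _ ≤ (3:ℝ)^n := by apply pow_le_pow_right₀ (by norm_num) hn
    _ ≤ (b:ℝ)^n := by apply pow_le_pow_left₀ (by norm_num) (by exact_mod_cast hb)
  set Q : ℝ := (b:ℝ)^n - 1 with hQdef
  have hQ : 2 ≤ Q := by simp [hQdef]; linarith
  have hQ0 : 0 < Q := by linarith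
  have hB0 : (0:ℝ) < (b:ℝ)^n := by linarith
  set L : ℝ := δ/(2*Q) with hLdef
  have hL0 : 0 < L := by positivity
  set u : ℝ := (p:ℝ)/Q with hudef
  have hple : (p:ℝ) + 1 < (b:ℝ)^n := by exact_mod_cast hp
  have hu_ge : (p:ℝ)/(b:ℝ)^n ≤ u := by
    apply div_le_div_of_nonneg_left (by positivity) hQ0 (by linarith)
  have hu_lt : u < ((p:ℝ)+1)/(b:ℝ)^n := by
    rw [hudef, div_lt_div_iff₀ hQ0 hB0]
    nlinarith
  have h2L : 2*L < 1/(b:ℝ)^n := by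
    have e : 2*L = δ/Q := by rw [hLdef]; field_simp
    rw [e, div_lt_div_iff₀ hQ0 hB0]
    nlinarith
  have hsum : ((p:ℝ)+1)/(b:ℝ)^n - (p:ℝ)/(b:ℝ)^n = 1/(b:ℝ)^n := by
    field_simp; ring
  -- choose α
  by_cases hcase : u + L < ((p:ℝ)+1)/(b:ℝ)^n
  · refine ⟨u, hu_ge, hcase, ?_⟩
    intro x hx
    have hx1 : u ≤ x := hx.1
    have hx2 : x ≤ u + L := hx.2
    have hxl : (p:ℝ)/(b:ℝ)^n ≤ x := le_trans hu_ge hx1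
    have hxr : x < ((p:ℝ)+1)/(b:ℝ)^n := lt_of_le_of_lt hx2 hcase
    have hfloor : ⌊(b:ℝ)^n * x⌋ = (p:ℤ) := by
      apply Int.floor_eq_iff.mpr
      constructor
      · push_cast
        calc (p:ℝ) = (b:ℝ)^n * ((p:ℝ)/(b:ℝ)^n) := by field_simp
        _ ≤ (b:ℝ)^n * x := by nlinarith
      · push_cast
        calc (b:ℝ)^n * x < (b:ℝ)^n * (((p:ℝ)+1)/(b:ℝ)^n) := by nlinarith
        _ = (p:ℝ) + 1 := by field_simp
    have : Int.fract ((b:ℝ)^n * x) = (b:ℝ)^n * x - (p:ℝ) := by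
      rw [Int.fract, hfloor]; push_cast; ring
    rw [this]
    have hval : (b:ℝ)^n * x - (p:ℝ) - x = Q * (x - u) := by
      rw [hQdef, hudef]; field_simp; ring
    have habs : |(b:ℝ)^n * x - (p:ℝ) - x| = Q * |x - u| := by
      rw [hval, abs_mul, abs_of_pos hQ0]
    rw [show (b:ℝ)^n * x - (p:ℝ) - x = ((b:ℝ)^n * x - (p:ℝ)) - x by ring] at habs
    rw [habs]
    have : |x - u| ≤ L := by
      rw [abs_le]; constructor <;> linarith
    calc Q * |x - u| ≤ Q * L := by nlinarith
    _ = δ/2 := by rw [hLdef]; field_simp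
    _ < δ := by linarith
  · push_neg at hcase
    have hαge : (p:ℝ)/(b:ℝ)^n < u - L := by
      have : ((p:ℝ)+1)/(b:ℝ)^n - u ≤ L := by linarith
      have h3 : u - (p:ℝ)/(b:ℝ)^n ≥ 1/(b:ℝ)^n - L := by linarith
      linarith
    refine ⟨u - L, le_of_lt hαge, by linarith, ?_⟩
    intro x hx
    have hx1 : u - L ≤ x := hx.1
    have hx2 : x ≤ u := by have := hx.2; linarith
    have hxl : (p:ℝ)/(b:ℝ)^n ≤ x := by linarith
    have hxr : x < ((p:ℝ)+1)/(b:ℝ)^n := lt_of_le_of_lt hx2 hu_lt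
    have hfloor : ⌊(b:ℝ)^n * x⌋ = (p:ℤ) := by
      apply Int.floor_eq_iff.mpr
      constructor
      · push_cast
        calc (p:ℝ) = (b:ℝ)^n * ((p:ℝ)/(b:ℝ)^n) := by field_simp
        _ ≤ (b:ℝ)^n * x := by nlinarith
      · push_cast
        calc (b:ℝ)^n * x < (b:ℝ)^n * (((p:ℝ)+1)/(b:ℝ)^n) := by nlinarith
        _ = (p:ℝ) + 1 := by field_simp
    have hfr : Int.fract ((b:ℝ)^n * x) = (b:ℝ)^n * x - (p:ℝ) := by
      rw [Int.fract, hfloor]; push_cast; ring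
    rw [hfr]
    have hval : (b:ℝ)^n * x - (p:ℝ) - x = Q * (x - u) := by
      rw [hQdef, hudef]; field_simp; ring
    have habs : |(b:ℝ)^n * x - (p:ℝ) - x| = Q * |x - u| := by
      rw [hval, abs_mul, abs_of_pos hQ0]
    rw [show (b:ℝ)^n * x - (p:ℝ) - x = ((b:ℝ)^n * x - (p:ℝ)) - x by ring] at habs
    rw [habs]
    have : |x - u| ≤ L := by
      rw [abs_le]; constructor <;> linarith
    calc Q * |x - u| ≤ Q * L := by nlinarith
    _ = δ/2 := by rw [hLdef]; field_simp
    _ < δ := by linarith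


open scoped Classical in
lemma mem_SC {b N : ℕ} {δ : ℝ} {n i : ℕ} :
    i ∈ SC b N δ n ↔ i ∈ Finset.range (b^n) ∧
      (ESet b N δ ∩ Set.Ico ((i:ℝ)/(b:ℝ)^n) (((i:ℝ)+1)/(b:ℝ)^n)).Nonempty := by
  rw [SC]; exact Finset.mem_filter

lemma bad_child {b N : ℕ} (hb : 3 ≤ b) {δ : ℝ} (hδ0 : 0 < δ) (hδ1 : δ ≤ 1/3)
    {m : ℕ} (hm : 4 ≤ δ * (b:ℝ)^m) {n : ℕ} (hn : 1 ≤ n) (hNn : N ≤ n)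
    {p : ℕ} (hp : p + 1 < b^n) :
    ∃ c : ℕ, p * b^m ≤ c ∧ c < (p+1) * b^m ∧ c ∉ SC b N δ (n+m) := by
  obtain ⟨α, hα1, hα2, hα3⟩ := elim hb hδ0 hδ1 hn hp
  have hbn : (3:ℝ) ≤ (b:ℝ)^n := by
    calc (3:ℝ) = 3^1 := by norm_num
    _ ≤ (3:ℝ)^n := by apply pow_le_pow_right₀ (by norm_num) hn
    _ ≤ (b:ℝ)^n := by apply pow_le_pow_left₀ (by norm_num) (by exact_mod_cast hb)
  have hB0 : (0:ℝ) < (b:ℝ)^n := by linarith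
  have hbm0 : (0:ℝ) < (b:ℝ)^m := by positivity
  set L : ℝ := δ/(2*((b:ℝ)^n - 1)) with hLdef
  set h : ℝ := (b:ℝ)^(n+m) with hhdef
  have hh0 : (0:ℝ) < h := by rw [hhdef]; positivity
  have hhsplit : h = (b:ℝ)^n * (b:ℝ)^m := pow_add _ _ _
  have hLh : 2 ≤ L * h := by
    have h1 : δ / (2*(b:ℝ)^n) ≤ L := by
      apply div_le_div_of_nonneg_left (le_of_lt hδ0) (by linarith) (by linarith)
    have h2 : δ / (2*(b:ℝ)^n) * h = δ * (b:ℝ)^m / 2 := by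
      rw [hhsplit]; field_simp
    nlinarith [mul_le_mul_of_nonneg_right h1 (le_of_lt hh0)]
  have hα0 : 0 ≤ α := le_trans (by positivity) hα1
  set c0 : ℤ := ⌈α * h⌉ with hc0def
  have hc00 : 0 ≤ c0 := Int.ceil_nonneg (by positivity)
  refine ⟨c0.toNat, ?_, ?_, ?_⟩
  case' _ => skip
  all_goals
    have hcc : ((c0.toNat : ℕ) : ℝ) = (c0:ℝ) := by exact_mod_cast Int.toNat_of_nonneg hc00
  · -- p * b^m ≤ c
    have : ((p * b^m : ℕ) : ℝ) ≤ ((c0.toNat : ℕ) : ℝ) := by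
      rw [hcc]
      have h1 : ((p * b^m : ℕ) : ℝ) = (p:ℝ)/(b:ℝ)^n * h := by
        push_cast; rw [hhsplit]; field_simp
      rw [h1]
      calc (p:ℝ)/(b:ℝ)^n * h ≤ α * h := by nlinarith
      _ ≤ (c0:ℝ) := Int.le_ceil _
    exact_mod_cast this
  · -- c < (p+1) * b^m
    have : ((c0.toNat : ℕ) : ℝ) < (((p+1) * b^m : ℕ) : ℝ) := by
      rw [hcc]
      have h1 : (((p+1) * b^m : ℕ) : ℝ) = ((p:ℝ)+1)/(b:ℝ)^n * h := by
        push_cast; rw [hhsplit]; field_simp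
      rw [h1]
      calc (c0:ℝ) < α * h + 1 := Int.ceil_lt_add_one _
      _ ≤ α * h + L * h / 2 := by linarith
      _ ≤ (α + L) * h := by nlinarith
      _ < ((p:ℝ)+1)/(b:ℝ)^n * h := by nlinarith
    exact_mod_cast this
  · -- not in SC
    intro hmem
    obtain ⟨x, hxE, hxI⟩ := (mem_SC.mp hmem).2
    have hx1 : α ≤ x := by
      refine le_trans ((le_div_iff₀ hh0).mpr ?_) hxI.1
      rw [hcc]; exact Int.le_ceil _
    have hx2 : x ≤ α + L := by
      have h3 : (((c0.toNat : ℕ) : ℝ)+1)/h ≤ α + L := by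
        rw [div_le_iff₀ hh0, hcc]
        have hc1 := Int.ceil_lt_add_one (α * h)
        have : (α + L) * h = α * h + L * h := by ring
        rw [this]
        linarith
      exact le_trans (le_of_lt hxI.2) h3
    have hcontra := hα3 x ⟨hx1, hx2⟩
    obtain ⟨k, rfl⟩ : ∃ k, n = k + 1 := ⟨n - 1, by omega⟩
    have hE := hxE.2 (k+1) hNn
    rw [tmap_iter] at hE
    linarith

lemma cover_mem {b N : ℕ} (hb : 3 ≤ b) {δ : ℝ} (n : ℕ) {x : ℝ} (hx : x ∈ ESet b N δ) :
    ∃ i ∈ SC b N δ n, x ∈ Set.Ico ((i:ℝ)/(b:ℝ)^n) (((i:ℝ)+1)/(b:ℝ)^n) := by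
  have hx0 : (0:ℝ) ≤ x := hx.1.1
  have hx1 : x < 1 := hx.1.2
  have hbpos : (0:ℝ) < (b:ℝ) := by exact_mod_cast (by omega : 0 < b)
  have hb0 : (0:ℝ) < (b:ℝ)^n := pow_pos hbpos n
  set j : ℤ := ⌊(b:ℝ)^n * x⌋ with hjdef
  have hj0 : 0 ≤ j := Int.floor_nonneg.mpr (by positivity)
  have hjle : (j:ℝ) ≤ (b:ℝ)^n * x := Int.floor_le _
  have hjlt : (b:ℝ)^n * x < (j:ℝ) + 1 := Int.lt_floor_add_one _
  set i : ℕ := j.toNat with hidef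
  have hij : ((i:ℕ):ℝ) = (j:ℝ) := by exact_mod_cast Int.toNat_of_nonneg hj0
  have hmemI : x ∈ Set.Ico ((i:ℝ)/(b:ℝ)^n) (((i:ℝ)+1)/(b:ℝ)^n) := by
    constructor
    · rw [div_le_iff₀ hb0, hij]; nlinarith
    · rw [lt_div_iff₀ hb0, hij]; nlinarith
  have hirange : i < b^n := by
    have : ((i:ℕ):ℝ) < ((b^n : ℕ):ℝ) := by
      push_cast
      rw [hij]
      nlinarith
    exact_mod_cast this
  exact ⟨i, mem_SC.mpr ⟨Finset.mem_range.mpr hirange, ⟨x, hx, hmemI⟩⟩, hmemI⟩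

lemma card_rec {b N : ℕ} (hb : 3 ≤ b) {δ : ℝ} (hδ0 : 0 < δ) (hδ1 : δ ≤ 1/3)
    {m : ℕ} (hm : 4 ≤ δ * (b:ℝ)^m) {n : ℕ} (hn : 1 ≤ n) (hNn : N ≤ n) :
    (SC b N δ (n+m)).card + 1 ≤ (b^m - 1) * ((SC b N δ n).card + 1) := by
  classical
  have hbpos : (0:ℝ) < (b:ℝ) := by exact_mod_cast (by omega : 0 < b)
  have hbm12 : 12 ≤ b^m := by
    have h1 : (12:ℝ) ≤ ((b^m : ℕ):ℝ) := by
      push_cast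
      nlinarith [pow_pos hbpos m]
    exact_mod_cast h1
  have hbmpos : 0 < b^m := by omega
  -- bad child choice
  have hc : ∀ p : ℕ, ∃ c : ℕ, p + 1 < b^n →
      (p * b^m ≤ c ∧ c < (p+1) * b^m ∧ c ∉ SC b N δ (n+m)) := by
    intro p
    by_cases hp : p + 1 < b^n
    · obtain ⟨c, h1, h2, h3⟩ := bad_child hb hδ0 hδ1 hm hn hNn hp
      exact ⟨c, fun _ => ⟨h1, h2, h3⟩⟩
    · exact ⟨0, fun h => absurd h hp⟩
  choose f hf using hc
  set g : ℕ → Finset ℕ := fun p =>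
    if p + 1 < b^n then (Finset.Ico (p*b^m) ((p+1)*b^m)).erase (f p)
    else Finset.Ico (p*b^m) ((p+1)*b^m) with hgdef
  have hsub : SC b N δ (n+m) ⊆ (SC b N δ n).biUnion g := by
    intro i hi
    obtain ⟨x, hxE, hxI⟩ := (mem_SC.mp hi).2
    have hirange : i < b^(n+m) := Finset.mem_range.mp (mem_SC.mp hi).1
    set p : ℕ := i / b^m with hpdef
    have h1 : b^m * p + i % b^m = i := Nat.div_add_mod i (b^m)
    have h2 : i % b^m < b^m := Nat.mod_lt _ hbmpos
    have hple : p * b^m ≤ i := Nat.div_mul_le_self i (b^m)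
    have hilt : i + 1 ≤ (p+1) * b^m := by
      have e : (p+1) * b^m = b^m * p + b^m := by ring
      rw [e]; linarith
    have hprange : p < b^n := by
      rw [hpdef, Nat.div_lt_iff_lt_mul hbmpos, ← pow_add]
      exact hirange
    -- real containment
    have hb0n : (0:ℝ) < (b:ℝ)^n := pow_pos hbpos n
    have hb0nm : (0:ℝ) < (b:ℝ)^(n+m) := pow_pos hbpos (n+m)
    have hsplit : ((b:ℝ))^(n+m) = (b:ℝ)^n * (b:ℝ)^m := pow_add _ _ _
    have hlow : ((p:ℝ))/(b:ℝ)^n ≤ (i:ℝ)/(b:ℝ)^(n+m) := by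
      rw [div_le_div_iff₀ hb0n hb0nm, hsplit]
      have : ((p * b^m : ℕ):ℝ) ≤ ((i:ℕ):ℝ) := by exact_mod_cast hple
      push_cast at this
      nlinarith
    have hhigh : ((i:ℝ)+1)/(b:ℝ)^(n+m) ≤ ((p:ℝ)+1)/(b:ℝ)^n := by
      rw [div_le_div_iff₀ hb0nm hb0n, hsplit]
      have : ((i + 1 : ℕ):ℝ) ≤ (((p+1) * b^m : ℕ):ℝ) := by exact_mod_cast hilt
      push_cast at this
      nlinarith
    have hxP : x ∈ Set.Ico ((p:ℝ)/(b:ℝ)^n) (((p:ℝ)+1)/(b:ℝ)^n) :=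
      ⟨le_trans hlow hxI.1, lt_of_lt_of_le hxI.2 hhigh⟩
    have hpSC : p ∈ SC b N δ n :=
      mem_SC.mpr ⟨Finset.mem_range.mpr hprange, ⟨x, hxE, hxP⟩⟩
    refine Finset.mem_biUnion.mpr ⟨p, hpSC, ?_⟩
    have hIco : i ∈ Finset.Ico (p*b^m) ((p+1)*b^m) := Finset.mem_Ico.mpr ⟨hple, by omega⟩
    rw [hgdef]
    by_cases hp : p + 1 < b^n
    · simp only [if_pos hp]
      exact Finset.mem_erase.mpr ⟨fun he => (hf p hp).2.2 (he ▸ hi), hIco⟩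
    · simp only [if_neg hp]; exact hIco
  -- cardinality
  have hcard1 : (SC b N δ (n+m)).card ≤ ∑ p ∈ SC b N δ n, (g p).card :=
    le_trans (Finset.card_le_card hsub) (Finset.card_biUnion_le)
  have hIcoCard : ∀ p : ℕ, (Finset.Ico (p*b^m) ((p+1)*b^m)).card = b^m := by
    intro p
    rw [Nat.card_Ico]
    have : (p+1)*b^m = p*b^m + b^m := by ring
    omega
  have hgcard : ∀ p : ℕ, (g p).card ≤ (b^m - 1) + (if p + 1 < b^n then 0 else 1) := by
    intro p
    rw [hgdef]
    by_cases hp : p + 1 < b^n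
    · simp only [if_pos hp]
      have hfmem : f p ∈ Finset.Ico (p*b^m) ((p+1)*b^m) :=
        Finset.mem_Ico.mpr ⟨(hf p hp).1, (hf p hp).2.1⟩
      rw [Finset.card_erase_of_mem hfmem, hIcoCard p]
      simp
    · simp only [if_neg hp]
      rw [hIcoCard p]
      omega
  have hsum2 : ∑ p ∈ SC b N δ n, (g p).card
      ≤ (b^m - 1) * (SC b N δ n).card + 1 := by
    calc ∑ p ∈ SC b N δ n, (g p).card
        ≤ ∑ p ∈ SC b N δ n, ((b^m - 1) + (if p + 1 < b^n then 0 else 1)) :=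
          Finset.sum_le_sum (fun p _ => hgcard p)
      _ = (b^m - 1) * (SC b N δ n).card
          + ∑ p ∈ SC b N δ n, (if p + 1 < b^n then 0 else 1) := by
          rw [Finset.sum_add_distrib, Finset.sum_const, smul_eq_mul, mul_comm]
      _ ≤ (b^m - 1) * (SC b N δ n).card + 1 := by
          have : ∑ p ∈ SC b N δ n, (if p + 1 < b^n then 0 else 1)
              = ((SC b N δ n).filter (fun p => ¬ (p + 1 < b^n))).card := by
            rw [Finset.card_filter]
            apply Finset.sum_congr rfl
            intro p _
            by_cases hp : p + 1 < b^n <;> simp [hp]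
          rw [this]
          have hsube : (SC b N δ n).filter (fun p => ¬ (p + 1 < b^n)) ⊆ {b^n - 1} := by
            intro p hp
            rw [Finset.mem_filter] at hp
            have := Finset.mem_range.mp (mem_SC.mp hp.1).1
            simp only [Finset.mem_singleton]
            omega
          have hle1 := Finset.card_le_card hsube
          rw [Finset.card_singleton] at hle1
          exact Nat.add_le_add_left hle1 _
  have hK := le_trans hcard1 hsum2
  have e : (b^m - 1) * ((SC b N δ n).card + 1)
      = (b^m - 1) * (SC b N δ n).card + (b^m - 1) := by ring
  rw [e]
  have h2 : 2 ≤ b^m - 1 := by omega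
  linarith
lemma card_SC_base {b N : ℕ} {δ : ℝ} (n : ℕ) : (SC b N δ n).card ≤ b^n := by
  have hsub : SC b N δ n ⊆ Finset.range (b^n) := fun i hi => (mem_SC.mp hi).1
  calc (SC b N δ n).card ≤ (Finset.range (b^n)).card := Finset.card_le_card hsub
  _ = b^n := Finset.card_range _

lemma card_iter {b N : ℕ} (hb : 3 ≤ b) {δ : ℝ} (hδ0 : 0 < δ) (hδ1 : δ ≤ 1/3)
    {m : ℕ} (hm : 4 ≤ δ * (b:ℝ)^m) (hN : 1 ≤ N) (k : ℕ) :
    (SC b N δ (N + k*m)).card + 1 ≤ (b^m - 1)^k * ((SC b N δ N).card + 1) := by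
  induction k with
  | zero => simp
  | succ k ih =>
    have h1 : N + (k+1)*m = (N + k*m) + m := by ring
    rw [h1]
    calc (SC b N δ ((N + k*m) + m)).card + 1
        ≤ (b^m - 1) * ((SC b N δ (N + k*m)).card + 1) :=
          card_rec hb hδ0 hδ1 hm (by omega) (by omega)
      _ ≤ (b^m - 1) * ((b^m - 1)^k * ((SC b N δ N).card + 1)) :=
          Nat.mul_le_mul_left _ ih
      _ = (b^m - 1)^(k+1) * ((SC b N δ N).card + 1) := by ring

lemma dimH_ESet_le {b N : ℕ} (hb : 3 ≤ b) {δ : ℝ} (hδ0 : 0 < δ) (hδ1 : δ ≤ 1/3)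
    {m : ℕ} (hm : 4 ≤ δ * (b:ℝ)^m) (hN : 1 ≤ N) :
    dimH (ESet b N δ) ≤ ENNReal.ofReal (Real.logb ((b:ℝ)^m) ((b:ℝ)^m - 1)) := by
  classical
  have hbpos : (0:ℝ) < (b:ℝ) := by exact_mod_cast (by omega : 0 < b)
  have hb1R : (1:ℝ) < (b:ℝ) := by exact_mod_cast (by omega : 1 < b)
  set B0 : ℝ := (b:ℝ)^m with hB0def
  have hB0pos : 0 < B0 := pow_pos hbpos m
  have hB012 : (12:ℝ) ≤ B0 := by nlinarith
  set d : ℝ := Real.logb B0 (B0 - 1) with hddef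
  have hd0 : 0 ≤ d := Real.logb_nonneg (by linarith) (by linarith)
  have hdpos : 0 < d := Real.logb_pos (by linarith) (by linarith)
  have hd1 : d < 1 := by
    have h1 : d < Real.logb B0 B0 :=
      Real.logb_lt_logb (by linarith) (by linarith) (by linarith)
    rwa [Real.logb_self_eq_one (by linarith)] at h1
  have hrpow : B0 ^ d = B0 - 1 :=
    Real.rpow_logb (by linarith) (by linarith) (by linarith)
  have hm1 : 1 ≤ m := by
    rcases Nat.eq_zero_or_pos m with h | h
    · exfalso; subst h; rw [pow_zero] at hB0def; linarith
    · exact h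
  -- the covers
  set e : ℕ → ℕ := fun k => N + k*m with hedef
  set t : ℕ → ℕ → Set ℝ := fun k i =>
    if i ∈ SC b N δ (e k) then Set.Ico ((i:ℝ)/(b:ℝ)^(e k)) (((i:ℝ)+1)/(b:ℝ)^(e k))
    else ∅ with htdef
  set r : ℕ → ℝ≥0∞ := fun k => ENNReal.ofReal ((b:ℝ)⁻¹ ^ (e k)) with hrdef
  have hinv0 : (0:ℝ) ≤ (b:ℝ)⁻¹ := by positivity
  have hinv1 : (b:ℝ)⁻¹ < 1 := by rw [inv_lt_one_iff₀]; right; exact hb1R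
  have he_ge : ∀ k, k ≤ e k := by
    intro k
    show k ≤ N + k*m
    calc k ≤ k*m := Nat.le_mul_of_pos_right k hm1
    _ ≤ N + k*m := Nat.le_add_left _ _
  have hr0 : Filter.Tendsto r Filter.atTop (nhds 0) := by
    have h1 : Filter.Tendsto (fun k : ℕ => (b:ℝ)⁻¹ ^ (e k)) Filter.atTop (nhds 0) := by
      apply (tendsto_pow_atTop_nhds_zero_of_lt_one hinv0 hinv1).comp
      exact Filter.tendsto_atTop_mono he_ge Filter.tendsto_id
    have h2 := ENNReal.tendsto_ofReal (m := fun k : ℕ => (b:ℝ)⁻¹ ^ (e k)) h1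
    simpa [hrdef] using h2
  have hediam : ∀ k i, i ∈ SC b N δ (e k) →
      EMetric.diam (t k i) = ENNReal.ofReal ((b:ℝ)⁻¹ ^ (e k)) := by
    intro k i hi
    simp only [htdef, if_pos hi]
    show Metric.ediam _ = _; rw [Real.ediam_Ico]
    congr 1
    have hbk : (0:ℝ) < (b:ℝ)^(e k) := pow_pos hbpos _
    rw [inv_pow]
    field_simp; ring
  have ht : ∀ᶠ k in Filter.atTop, ∀ i, EMetric.diam (t k i) ≤ r k := by
    apply Filter.Eventually.of_forall
    intro k i
    by_cases hi : i ∈ SC b N δ (e k)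
    · rw [hediam k i hi, hrdef]
    · simp only [htdef, if_neg hi]; exact Metric.ediam_empty.trans_le (zero_le')
  have hst : ∀ᶠ k in Filter.atTop, ESet b N δ ⊆ ⋃ i, t k i := by
    apply Filter.Eventually.of_forall
    intro k x hx
    obtain ⟨i, hiSC, hxI⟩ := cover_mem hb (e k) hx
    exact Set.mem_iUnion.mpr ⟨i, by simp only [htdef, if_pos hiSC]; exact hxI⟩
  have hμ := MeasureTheory.Measure.hausdorffMeasure_le_liminf_tsum d (ESet b N δ) r hr0 t ht hst
  -- bound each summand
  set D0 : ℕ := (SC b N δ N).card + 1 with hD0def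
  have hterm : ∀ k, (∑' i, EMetric.diam (t k i) ^ d) ≤ (D0 : ℝ≥0∞) := by
    intro k
    have hs0 : ∀ i ∉ SC b N δ (e k), EMetric.diam (t k i) ^ d = 0 := by
      intro i hi
      simp only [htdef, if_neg hi]
      show Metric.ediam (∅ : Set ℝ) ^ d = 0; rw [Metric.ediam_empty]
      exact ENNReal.zero_rpow_of_pos hdpos
    rw [tsum_eq_sum hs0]
    have hsv : ∀ i ∈ SC b N δ (e k),
        EMetric.diam (t k i) ^ d = ENNReal.ofReal (((b:ℝ)⁻¹ ^ (e k)) ^ d) := by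
      intro i hi
      rw [hediam k i hi, ENNReal.ofReal_rpow_of_pos (by positivity)]
    rw [Finset.sum_congr rfl hsv, Finset.sum_const, nsmul_eq_mul]
    -- real estimate
    have hcard := card_iter hb hδ0 hδ1 hm hN k
    have hcastsub : ((b^m - 1 : ℕ) : ℝ) = B0 - 1 := by
      have h1 : 1 ≤ b^m := Nat.one_le_pow _ _ (by omega)
      push_cast [Nat.cast_sub h1]
      rw [hB0def]
    have hCR : ((SC b N δ (e k)).card : ℝ) ≤ (B0 - 1)^k * (D0:ℝ) := by
      have h1 : ((SC b N δ (N + k*m)).card : ℝ) + 1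
          ≤ ((b^m - 1 : ℕ):ℝ)^k * ((D0:ℕ):ℝ) := by exact_mod_cast hcard
      rw [hcastsub] at h1
      show ((SC b N δ (N + k*m)).card : ℝ) ≤ (B0 - 1)^k * (D0:ℝ)
      linarith
    have hXle : ((b:ℝ)⁻¹ ^ (e k)) ^ d ≤ ((B0 - 1)⁻¹)^k := by
      have hy : (0:ℝ) < (b:ℝ)⁻¹^m := by positivity
      have h1 : (b:ℝ)⁻¹ ^ (e k) ≤ ((b:ℝ)⁻¹^m)^k := by
        show (b:ℝ)⁻¹ ^ (N + k*m) ≤ ((b:ℝ)⁻¹^m)^k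
        rw [pow_add, mul_comm k m, pow_mul]
        have h2 : (b:ℝ)⁻¹ ^ N ≤ 1 := pow_le_one₀ hinv0 (le_of_lt hinv1)
        exact mul_le_of_le_one_left (pow_nonneg (pow_nonneg hinv0 m) k) h2
      have h3 : ((b:ℝ)⁻¹ ^ (e k)) ^ d ≤ (((b:ℝ)⁻¹^m)^k) ^ d :=
        Real.rpow_le_rpow (by positivity) h1 hd0
      refine le_trans h3 (le_of_eq ?_)
      have hy' : (b:ℝ)⁻¹^m = B0⁻¹ := by rw [hB0def, inv_pow]
      rw [hy', ← Real.rpow_natCast (B0⁻¹) k, ← Real.rpow_mul (inv_nonneg.mpr hB0pos.le),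
        mul_comm, Real.rpow_mul (inv_nonneg.mpr hB0pos.le),
        Real.inv_rpow hB0pos.le, hrpow, Real.rpow_natCast]
    have hreal : ((SC b N δ (e k)).card : ℝ) * (((b:ℝ)⁻¹ ^ (e k)) ^ d) ≤ (D0:ℝ) := by
      have hX0 : (0:ℝ) ≤ ((b:ℝ)⁻¹ ^ (e k)) ^ d := by positivity
      have hprod : ((SC b N δ (e k)).card : ℝ) * (((b:ℝ)⁻¹ ^ (e k)) ^ d)
          ≤ ((B0 - 1)^k * (D0:ℝ)) * ((B0 - 1)⁻¹)^k :=
        mul_le_mul hCR hXle hX0 (mul_nonneg (pow_nonneg (by linarith) k) (Nat.cast_nonneg _))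
      refine le_trans hprod (le_of_eq ?_)
      have : ((B0 - 1)^k * (D0:ℝ)) * ((B0 - 1)⁻¹)^k
          = (D0:ℝ) * ((B0 - 1) * (B0 - 1)⁻¹)^k := by rw [mul_pow]; ring
      rw [this, mul_inv_cancel₀ (by linarith : B0 - 1 ≠ 0), one_pow, mul_one]
    calc ((SC b N δ (e k)).card : ℝ≥0∞) * ENNReal.ofReal (((b:ℝ)⁻¹ ^ (e k)) ^ d)
        = ENNReal.ofReal (((SC b N δ (e k)).card : ℝ) * (((b:ℝ)⁻¹ ^ (e k)) ^ d)) := by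
          rw [ENNReal.ofReal_mul (by positivity), ENNReal.ofReal_natCast]
      _ ≤ ENNReal.ofReal (D0:ℝ) := ENNReal.ofReal_le_ofReal hreal
      _ = (D0 : ℝ≥0∞) := ENNReal.ofReal_natCast _
  have hliminf : Filter.liminf (fun k => ∑' i, EMetric.diam (t k i) ^ d) Filter.atTop
      ≤ (D0 : ℝ≥0∞) := by
    calc Filter.liminf (fun k => ∑' i, EMetric.diam (t k i) ^ d) Filter.atTop
        ≤ Filter.liminf (fun _ : ℕ => (D0 : ℝ≥0∞)) Filter.atTop :=
          Filter.liminf_le_liminf (Filter.Eventually.of_forall hterm)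
      _ = (D0 : ℝ≥0∞) := Filter.liminf_const _
  have hfin : μH[d] (ESet b N δ) ≠ ⊤ :=
    ne_top_of_le_ne_top (ENNReal.natCast_ne_top D0) (le_trans hμ hliminf)
  set dn : ℝ≥0 := ⟨d, hd0⟩ with hdndef
  have hdim : dimH (ESet b N δ) ≤ (dn : ℝ≥0∞) :=
    dimH_le_of_hausdorffMeasure_ne_top hfin
  have hofreal : ENNReal.ofReal d = (dn : ℝ≥0∞) := ENNReal.ofReal_eq_coe_nnreal hd0
  rw [hofreal]
  exact hdim
/-- **Theorem 1.5 (ii).** If the set `E(φ)` has full Hausdorff dimension, then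
`liminf φ(n) = 0`. -/
theorem liminf_phi_eq_zero_of_dimH_eq_one (b : ℕ) (hb : 3 ≤ b)
    (φ : ℕ → ℝ) (hφ : ∀ n, 1 ≤ n → 0 < φ n)
    (hdim : dimH { x : ℝ | x ∈ Set.Ico (0 : ℝ) 1 ∧
        ∀ᶠ n in Filter.atTop, φ n ≤ |(Tmap b)^[n] x - x| } = 1) :
    Filter.liminf φ Filter.atTop = 0 := by
  by_contra hne
  have hb1R : (1:ℝ) < (b:ℝ) := by exact_mod_cast (by omega : 1 < b)
  set S : Set ℝ := {a : ℝ | ∀ᶠ n in Filter.atTop, a ≤ φ n} with hSdef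
  have hSl : Filter.liminf φ Filter.atTop = sSup S := Filter.liminf_eq
  have h0S : (0:ℝ) ∈ S := Filter.eventually_atTop.mpr ⟨1, fun n hn => (hφ n hn).le⟩
  by_cases hbdd : BddAbove S
  swap
  · exact hne (by rw [hSl, Real.sSup_of_not_bddAbove hbdd])
  have hpos : 0 < sSup S := by
    rcases lt_or_eq_of_le (le_csSup hbdd h0S) with h | h
    · exact h
    · exact absurd (by rw [hSl, ← h]) hne
  have hex : ∃ a ∈ S, sSup S / 2 < a := by
    by_contra h
    push_neg at h
    have : sSup S ≤ sSup S / 2 := Real.sSup_le (fun x hx => h x hx) (by linarith)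
    linarith
  obtain ⟨a, haS, ha⟩ := hex
  set δ : ℝ := min a (1/3) with hδdef
  have hδ0 : 0 < δ := lt_min (by linarith) (by norm_num)
  have hδ1 : δ ≤ 1/3 := min_le_right _ _
  have hev : ∀ᶠ n in Filter.atTop, δ ≤ φ n := haS.mono fun n h => le_trans (min_le_left _ _) h
  obtain ⟨m, hm⟩ := pow_unbounded_of_one_lt (4/δ) hb1R
  have hm4 : 4 ≤ δ * (b:ℝ)^m := by
    rw [div_lt_iff₀ hδ0] at hm
    nlinarith
  -- inclusion into the union
  have hsub : { x : ℝ | x ∈ Set.Ico (0 : ℝ) 1 ∧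
      ∀ᶠ n in Filter.atTop, φ n ≤ |(Tmap b)^[n] x - x| } ⊆ ⋃ N : ℕ, ESet b (N+1) δ := by
    intro x hx
    obtain ⟨hx1, hx2⟩ := hx
    obtain ⟨n1, h1⟩ := Filter.eventually_atTop.mp hx2
    obtain ⟨n2, h2⟩ := Filter.eventually_atTop.mp hev
    refine Set.mem_iUnion.mpr ⟨max n1 n2, hx1, fun n hn => ?_⟩
    have hn1 : n1 ≤ n := le_trans (le_trans (le_max_left n1 n2) (Nat.le_succ _)) hn
    have hn2 : n2 ≤ n := le_trans (le_trans (le_max_right n1 n2) (Nat.le_succ _)) hn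
    exact le_trans (h2 n hn2) (h1 n hn1)
  have hfinal : dimH { x : ℝ | x ∈ Set.Ico (0 : ℝ) 1 ∧
      ∀ᶠ n in Filter.atTop, φ n ≤ |(Tmap b)^[n] x - x| }
      ≤ ENNReal.ofReal (Real.logb ((b:ℝ)^m) ((b:ℝ)^m - 1)) := by
    refine le_trans (dimH_mono hsub) ?_
    rw [dimH_iUnion]
    exact iSup_le fun N => dimH_ESet_le hb hδ0 hδ1 hm4 (by omega)
  rw [hdim] at hfinal
  -- but the bound is < 1
  have hB012 : (12:ℝ) ≤ (b:ℝ)^m := by nlinarith [pow_pos (by linarith : (0:ℝ) < (b:ℝ)) m]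
  have hd1 : Real.logb ((b:ℝ)^m) ((b:ℝ)^m - 1) < 1 := by
    have h1 : Real.logb ((b:ℝ)^m) ((b:ℝ)^m - 1) < Real.logb ((b:ℝ)^m) ((b:ℝ)^m) :=
      Real.logb_lt_logb (by linarith) (by linarith) (by linarith)
    rwa [Real.logb_self_eq_one (by linarith)] at h1
  have : (1:ℝ≥0∞) < 1 := lt_of_le_of_lt hfinal (ENNReal.ofReal_lt_one.mpr hd1)
  exact lt_irrefl _ this
end Paper
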